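/- Let a < 0, b ≠ 0, c ≠ 0 be real constants and fix α ∈ (0, −2a). Define p = b²/(α(−2a − α)) and q = c²/(−2a − α). Then α* := √(b²q / (q p)) = √(b²/p) satisfies α* = √(α(−2a − α)), and the fixed-point iteration αᵢ₊₁ = √(αᵢ(−2a − αᵢ)) starting from any α₀ ∈ (0, −2a) converges to −a. -/
import Mathlib

lemma aux_conv (m : ℝ) (hm : 0 < m) (αs : ℕ → ℝ)
    (h0 : 0 < αs 0) (h0' : αs 0 < 2 * m)
    (hrec : ∀ i, αs (i + 1) = Real.sqrt (αs i * (2 * m - αs i))) :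
    Filter.Tendsto αs Filter.atTop (nhds m) := by
  have hpos : ∀ i, 0 < αs i ∧ αs i < 2 * m := by
    intro i
    induction i with
    | zero => exact ⟨h0, h0'⟩
    | succ n ih =>
      obtain ⟨h1, h2⟩ := ih
      rw [hrec n]
      constructor
      · exact Real.sqrt_pos.mpr (by nlinarith)
      · have : Real.sqrt (αs n * (2 * m - αs n)) ≤ m := by
          have h3 : αs n * (2 * m - αs n) ≤ m ^ 2 := by nlinarith [sq_nonneg (αs n - m)]
          calc Real.sqrt (αs n * (2 * m - αs n)) ≤ Real.sqrt (m ^ 2) :=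
                Real.sqrt_le_sqrt h3
            _ = m := by rw [Real.sqrt_sq hm.le]
        linarith
  have hle : ∀ i, αs (i + 1) ≤ m := by
    intro i
    obtain ⟨h1, h2⟩ := hpos i
    rw [hrec i]
    have h3 : αs i * (2 * m - αs i) ≤ m ^ 2 := by nlinarith [sq_nonneg (αs i - m)]
    calc Real.sqrt (αs i * (2 * m - αs i)) ≤ Real.sqrt (m ^ 2) :=
          Real.sqrt_le_sqrt h3
      _ = m := by rw [Real.sqrt_sq hm.le]
  set t : ℕ → ℝ := fun i => αs (i + 1) with ht
  have hmono : Monotone t := by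
    apply monotone_nat_of_le_succ
    intro n
    have hx := hle n
    have hxpos := (hpos (n + 1)).1
    show αs (n + 1) ≤ αs (n + 2)
    rw [hrec (n + 1)]
    refine (Real.le_sqrt hxpos.le (by nlinarith)).mpr ?_
    nlinarith
  have hbdd : BddAbove (Set.range t) := ⟨m, by rintro x ⟨i, rfl⟩; exact hle i⟩
  have htend : Filter.Tendsto t Filter.atTop (nhds (⨆ i, t i)) :=
    tendsto_atTop_ciSup hmono hbdd
  set L := ⨆ i, t i with hL
  have hL0 : 0 < L := lt_of_lt_of_le (hpos 1).1 (le_ciSup hbdd 0)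
  have hLm : L ≤ m := ciSup_le hle
  have htend2 : Filter.Tendsto (fun i => t (i + 1)) Filter.atTop (nhds L) :=
    htend.comp (Filter.tendsto_add_atTop_nat 1)
  have htend3 : Filter.Tendsto (fun i => Real.sqrt (t i * (2 * m - t i)))
      Filter.atTop (nhds (Real.sqrt (L * (2 * m - L)))) :=
    (htend.mul (tendsto_const_nhds.sub htend)).sqrt
  have heq : ∀ i, t (i + 1) = Real.sqrt (t i * (2 * m - t i)) := fun i => hrec (i + 1)
  have hLfix : L = Real.sqrt (L * (2 * m - L)) := by
    apply tendsto_nhds_unique htend2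
    exact htend3.congr (fun i => (heq i).symm)
  have hsq : L ^ 2 = L * (2 * m - L) := by
    have hnn : 0 ≤ L * (2 * m - L) := by nlinarith
    conv_lhs => rw [hLfix]
    exact Real.sq_sqrt hnn
  have hLeq : L = m := by nlinarith
  rw [hLeq] at htend
  exact (Filter.tendsto_add_atTop_iff_nat 1).mp htend

theorem stmt_8 (a b c : ℝ) (ha : a < 0) (hb : b ≠ 0) (hc : c ≠ 0)
    (α : ℝ) (hα : α ∈ Set.Ioo (0 : ℝ) (-2 * a))
    (p q : ℝ) (hp : p = b ^ 2 / (α * (-2 * a - α))) (hq : q = c ^ 2 / (-2 * a - α)) :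
    Real.sqrt (b ^ 2 * q / (q * p)) = Real.sqrt (α * (-2 * a - α)) ∧
    ∀ αs : ℕ → ℝ, αs 0 ∈ Set.Ioo (0 : ℝ) (-2 * a) →
      (∀ i, αs (i + 1) = Real.sqrt (αs i * (-2 * a - αs i))) →
      Filter.Tendsto αs Filter.atTop (nhds (-a)) := by
  obtain ⟨hα0, hα2⟩ := hα
  have hden : 0 < -2 * a - α := by linarith
  constructor
  · have hq0 : q ≠ 0 := by
      rw [hq]; positivity
    have hp0 : p ≠ 0 := by
      rw [hp]
      have : 0 < α * (-2 * a - α) := mul_pos hα0 hden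
      positivity
    congr 1
    have hb2 : (b : ℝ) ^ 2 ≠ 0 := pow_ne_zero 2 hb
    have h1 : α * (-2 * a - α) ≠ 0 := by positivity
    rw [mul_comm q p, mul_div_mul_right _ _ hq0, hp, div_div_cancel₀ hb2]
  · intro αs h0 hrec
    have hm : 0 < -a := by linarith
    have := aux_conv (-a) hm αs h0.1 (by have := h0.2; linarith)
      (fun i => by rw [hrec i]; ring_nf)
    exact this
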